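/- Let A be a complex Banach algebra with a character φ, and suppose A is φ-amenable. Let J be a closed left ideal of A (a closed linear subspace with a·j ∈ J for all a ∈ A and j ∈ J) such that the restriction φ|_J is not identically zero. Then J, regarded as a complex Banach algebra with the product inherited from A, is φ|_J-amenable; that is, there exists m ∈ J** with m(φ|_J) = 1 and j·m = φ(j)·m for all j ∈ J. -/

import Mathlib

/-- A (possibly non-unital) complex Banach algebra `A` with a character `φ` is
`φ`-amenable if there is `m ∈ A**` with `m(φ) = 1` and `a·m = φ(a)·m` for all `a ∈ A`,
where `(a·m)(f) = m(f·a)` and `(f·a)(b) = f(ab)`. -/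
def PhiAmenable (A : Type*) [NonUnitalNormedRing A] [NormedSpace ℂ A] [IsScalarTower ℂ A A]
    [SMulCommClass ℂ A A] (φ : A →L[ℂ] ℂ) : Prop :=
  ∃ m : (A →L[ℂ] ℂ) →L[ℂ] ℂ, m φ = 1 ∧
    ∀ (a : A) (f : A →L[ℂ] ℂ), m (f.comp (ContinuousLinearMap.mul ℂ A a)) = φ a * m f

/-- If `A` is a `φ`-amenable complex Banach algebra and `J` is a closed left ideal of `A`
on which `φ` does not vanish identically, then `J` (as a complex Banach algebra with the
inherited product) is `φ|_J`-amenable. -/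
theorem phiAmenable_of_closed_left_ideal (A : Type*) [NonUnitalNormedRing A]
    [NormedSpace ℂ A] [IsScalarTower ℂ A A] [SMulCommClass ℂ A A] [CompleteSpace A]
    (φ : A →L[ℂ] ℂ) (hφmul : ∀ a b : A, φ (a * b) = φ a * φ b) (hφne : φ ≠ 0)
    (hA : PhiAmenable A φ)
    (J : NonUnitalSubalgebra ℂ A) (hJclosed : IsClosed (J : Set A))
    (hJideal : ∀ a : A, ∀ j ∈ J, a * j ∈ J)
    (hφJ : ∃ j ∈ J, φ j ≠ 0) :
    @PhiAmenable ↥J _ (SubmoduleClass.toNormedSpace J) _ _ (φ.comp J.toSubmodule.subtypeL) := by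
  letI : NormedSpace ℂ ↥J := SubmoduleClass.toNormedSpace J
  obtain ⟨m, hm1, hmA⟩ := hA
  obtain ⟨j₁, hj₁J, hj₁⟩ := hφJ
  -- normalized element j₀ ∈ J with φ j₀ = 1
  set j₀ : A := (φ j₁)⁻¹ • j₁ with hj₀def
  have hj₀J : j₀ ∈ J := J.smul_mem _ hj₁J
  have hφj₀ : φ j₀ = 1 := by
    simp [hj₀def, inv_mul_cancel₀ hj₁]
  -- R : A →L[ℂ] J, a ↦ a * j₀
  let R : A →L[ℂ] ↥J :=
    ContinuousLinearMap.codRestrict ((ContinuousLinearMap.mul ℂ A).flip j₀)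
      J.toSubmodule (fun a => hJideal a j₀ hj₀J)
  have hR : ∀ a : A, (R a : A) = a * j₀ := fun a => rfl
  -- n : J** defined by n g = m (g ∘ R)
  let n : (↥J →L[ℂ] ℂ) →L[ℂ] ℂ :=
    m.comp ((ContinuousLinearMap.compL ℂ A ↥J ℂ).flip R)
  refine ⟨n, ?_, ?_⟩
  · have h1 : (φ.comp J.toSubmodule.subtypeL).comp R = φ := by
      ext a
      show φ ((R a : A)) = φ a
      rw [hR, hφmul, hφj₀, mul_one]
    simp only [n, ContinuousLinearMap.comp_apply, ContinuousLinearMap.flip_apply,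
      ContinuousLinearMap.compL_apply]
    rw [h1, hm1]
  · intro j g
    have key : (g.comp (ContinuousLinearMap.mul ℂ ↥J j)).comp R
        = (g.comp R).comp (ContinuousLinearMap.mul ℂ A (j : A)) := by
      ext a
      simp only [ContinuousLinearMap.comp_apply, ContinuousLinearMap.mul_apply']
      congr 1
      ext
      simp [hR, mul_assoc]
    simp only [n, ContinuousLinearMap.comp_apply, ContinuousLinearMap.flip_apply,
      ContinuousLinearMap.compL_apply]
    rw [key, hmA]
    rfl
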